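/- arXiv:1710.05228 — 2 statements merged into one kernel-verified Lean document; each statement's English description precedes it below -/
import Mathlib

section
/- A finite group G is of generalized D₄-type if and only if the exponent of G divides 4 and G is nilpotent of nilpotency class at most 2. Equivalently: there exist an n ≥ 0, a subgroup H of the n-fold direct product D₄ⁿ, and a surjective group homomorphism H → G, if and only if Monoid.exponent G divides 4 and G is nilpotent with nilpotency class ≤ 2. -/
noncomputable section

/-- The dihedral group of order 8. -/
abbrev D4 := DihedralGroup 4

/-- A finite group is of generalized `D₄`-type if it is (isomorphic to) a quotient of a
subgroup of `D₄ ^ n` for some `n ≥ 0`, i.e. there is a surjective homomorphism onto it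
from a subgroup of a finite power of `D₄`. -/
def IsGenD4Type (G : Type*) [Group G] : Prop :=
  ∃ (n : ℕ) (H : Subgroup (Fin n → D4)) (f : H →* G), Function.Surjective f

/-- A fixed algebraic closure of `ℚ`. -/
abbrev Qbar := AlgebraicClosure ℚ

/-- A finite extension `K/ℚ` inside `ℚ̄` is of generalized `D₄`-type if the Galois group over
`ℚ` of its Galois closure in `ℚ̄` is a group of generalized `D₄`-type. -/
def IsGenD4Ext (K : IntermediateField ℚ Qbar) : Prop :=
  FiniteDimensional ℚ K ∧
    IsGenD4Type ((IntermediateField.normalClosure ℚ K Qbar) ≃ₐ[ℚ] (IntermediateField.normalClosure ℚ K Qbar))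

/-- `ℚ(D₄^∞)`: the compositum inside `ℚ̄` of all finite extensions of `ℚ` of generalized
`D₄`-type. -/
def QD4inf : IntermediateField ℚ Qbar :=
  ⨆ K : {K : IntermediateField ℚ Qbar // IsGenD4Ext K}, K.1

/-- The field `ℚ(D₄^∞)`. -/
abbrev QD4K : Type := ↥QD4inf

/-- The group of points of an elliptic curve `E/ℚ` with coordinates in `ℚ(D₄^∞)`,
i.e. the points of the base change of `E` to `ℚ(D₄^∞)`. -/
abbrev Epts (W : WeierstrassCurve ℚ) : Type :=
  ((W.baseChange QD4K).toAffine).Point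

open Classical in
/-- The torsion subgroup of `E(ℚ(D₄^∞))`. -/
abbrev EptsTors (W : WeierstrassCurve ℚ) : AddSubgroup (Epts W) :=
  AddCommGroup.torsion (Epts W)

instance : Fact (Nat.Prime 5) := ⟨by norm_num⟩
instance : Fact (Nat.Prime 7) := ⟨by norm_num⟩
instance : Fact (Nat.Prime 13) := ⟨by norm_num⟩

open Classical in
/-- The `p`-primary component of `E(ℚ(D₄^∞))`: the subgroup of points of `p`-power order. -/
abbrev EptsPrimary (W : WeierstrassCurve ℚ) (p : ℕ) [Fact p.Prime] : AddSubgroup (Epts W) :=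
  AddCommGroup.primaryComponent (Epts W) p

/-- The `j`-invariants of elliptic curves over `ℚ` with complex multiplication. -/
def J_CM : Set ℚ :=
  {0, 1728, -3375, 8000, 54000, 287496, 16581375, -12288000, -32768, -884736,
    -884736000, -147197952000, -262537412640768000}


open scoped commutatorElement
set_option linter.unusedSectionVars false
namespace GD4
variable {G : Type*} [Group G]

section class2
variable (hcl : ∀ a b c : G, ⁅⁅a, b⁆, c⁆ = 1)
include hcl

lemma comm_central (a b c : G) : Commute ⁅a, b⁆ c :=
  commutatorElement_eq_one_iff_commute.mp (hcl a b c)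

lemma comm_aux (x u v : G) : ⁅x, u * v⁆ = ⁅v, x⁻¹⁆ * ⁅x, u⁆ := by
  have h1 : v * x⁻¹ = ⁅v, x⁻¹⁆ * x⁻¹ * v := by group
  have h2 : x * u * ⁅v, x⁻¹⁆ = ⁅v, x⁻¹⁆ * (x * u) :=
    ((comm_central hcl v x⁻¹ (x * u)).eq).symm
  calc ⁅x, u * v⁆ = x * u * (v * x⁻¹) * v⁻¹ * u⁻¹ := by
        rw [commutatorElement_def]; group
    _ = x * u * (⁅v, x⁻¹⁆ * x⁻¹ * v) * v⁻¹ * u⁻¹ := by rw [h1]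
    _ = x * u * ⁅v, x⁻¹⁆ * x⁻¹ * u⁻¹ := by
        simp only [mul_assoc, mul_inv_cancel_left, inv_mul_cancel_left, mul_inv_cancel,
          mul_one, mul_inv_cancel_right]
    _ = ⁅v, x⁻¹⁆ * (x * u) * x⁻¹ * u⁻¹ := by rw [h2]
    _ = ⁅v, x⁻¹⁆ * ⁅x, u⁆ := by
        simp only [commutatorElement_def, mul_assoc]

lemma comm_inv_right' (x v : G) : ⁅v, x⁻¹⁆ = ⁅x, v⁆ := by
  have := comm_aux hcl x 1 v
  simpa using this.symm

lemma comm_mul_right (x u v : G) : ⁅x, u * v⁆ = ⁅x, u⁆ * ⁅x, v⁆ := by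
  rw [comm_aux hcl, comm_inv_right' hcl]
  exact (comm_central hcl x v ⁅x, u⁆).eq

lemma comm_mul_left (u v x : G) : ⁅u * v, x⁆ = ⁅u, x⁆ * ⁅v, x⁆ := by
  rw [← commutatorElement_inv, comm_mul_right hcl, mul_inv_rev,
    commutatorElement_inv, commutatorElement_inv]
  exact ((comm_central hcl v x ⁅u, x⁆).eq)

lemma comm_pow_right (x y : G) (n : ℕ) : ⁅x, y ^ n⁆ = ⁅x, y⁆ ^ n := by
  induction n with
  | zero => simp
  | succ n ih => rw [pow_succ, comm_mul_right hcl, ih, pow_succ]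

lemma comm_pow_left (x y : G) (n : ℕ) : ⁅x ^ n, y⁆ = ⁅x, y⁆ ^ n := by
  induction n with
  | zero => simp
  | succ n ih => rw [pow_succ, comm_mul_left hcl, ih, pow_succ]

variable (hexp : ∀ g : G, g ^ 4 = 1)
include hexp

lemma comm_sq (x y : G) : ⁅x, y⁆ ^ 2 = 1 := by
  have key : ∀ a b : G, (a * b) ^ 2 = ⁅b, a⁆ * (a ^ 2 * b ^ 2) := by
    intro a b
    have hba : b * a = ⁅b, a⁆ * (a * b) := by group
    have hctr : a * ⁅b, a⁆ = ⁅b, a⁆ * a := ((comm_central hcl b a a).eq).symm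
    calc (a * b) ^ 2 = a * (b * a) * b := by rw [pow_two]; simp only [mul_assoc]
      _ = a * (⁅b, a⁆ * (a * b)) * b := by rw [hba]
      _ = a * ⁅b, a⁆ * (a * (b * b)) := by simp only [mul_assoc]
      _ = ⁅b, a⁆ * a * (a * (b * b)) := by rw [hctr]
      _ = ⁅b, a⁆ * (a ^ 2 * b ^ 2) := by rw [pow_two, pow_two]; simp only [mul_assoc]
  have h4 : ⁅y, x⁆ ^ 4 = 1 := by
    rw [← comm_pow_left hcl, hexp, commutatorElement_one_left]
  have hyx2 : ⁅y ^ 2, x ^ 2⁆ = 1 := by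
    rw [comm_pow_left hcl, comm_pow_right hcl, ← pow_mul]
    norm_num
    exact h4
  have hsq : ∀ g : G, (g ^ 2) ^ 2 = g ^ 4 := by intro g; rw [← pow_mul]
  have h1 : (1 : G) = ⁅y, x⁆ ^ 2 := by
    have e2 := key x y
    have e3 := key (x ^ 2) (y ^ 2)
    have hc2 : Commute (⁅y, x⁆) (x ^ 2 * y ^ 2) := comm_central hcl y x _
    calc (1 : G) = (x * y) ^ 4 := (hexp _).symm
      _ = ((x * y) ^ 2) ^ 2 := (hsq _).symm
      _ = (⁅y, x⁆ * (x ^ 2 * y ^ 2)) ^ 2 := by rw [e2]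
      _ = ⁅y, x⁆ ^ 2 * (x ^ 2 * y ^ 2) ^ 2 := (hc2.mul_pow 2)
      _ = ⁅y, x⁆ ^ 2 * (⁅y ^ 2, x ^ 2⁆ * ((x ^ 2) ^ 2 * (y ^ 2) ^ 2)) := by rw [e3]
      _ = ⁅y, x⁆ ^ 2 := by rw [hyx2, hsq, hsq, hexp, hexp]; simp
  have hyx : ⁅y, x⁆ ^ 2 = 1 := h1.symm
  calc ⁅x, y⁆ ^ 2 = (⁅y, x⁆⁻¹) ^ 2 := by rw [commutatorElement_inv]
    _ = (⁅y, x⁆ ^ 2)⁻¹ := by rw [inv_pow]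
    _ = 1 := by rw [hyx, inv_one]

lemma comm_symm (x y : G) : ⁅y, x⁆ = ⁅x, y⁆ := by
  have h := comm_sq hcl hexp x y
  rw [← commutatorElement_inv]
  exact inv_eq_of_mul_eq_one_left (by rw [← pow_two, h])

lemma comm_inv_left' (x y : G) : ⁅x⁻¹, y⁆ = ⁅y, x⁆ := by
  have := comm_inv_right' hcl x⁻¹ y
  rw [inv_inv] at this
  exact this.symm

lemma comm_zpow_right (x y : G) (a : ℤ) : ⁅x, y ^ a⁆ = ⁅x, y⁆ ^ a := by
  cases a with
  | ofNat n => simpa [zpow_natCast] using comm_pow_right hcl x y n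
  | negSucc n =>
      rw [zpow_negSucc, zpow_negSucc, comm_inv_right' hcl (y ^ (n + 1)) x,
        comm_pow_left hcl, comm_symm hcl hexp]
      have h := comm_sq hcl hexp x y
      have h2 : ⁅x, y⁆ ^ (n + 1) * ⁅x, y⁆ ^ (n + 1) = 1 := by
        rw [← pow_add, ← two_mul, pow_mul, h, one_pow]
      exact (inv_eq_of_mul_eq_one_left h2).symm

lemma comm_zpow_parity (x y : G) (a : ℤ) :
    ⁅x, y ^ a⁆ = if a % 2 = 0 then 1 else ⁅x, y⁆ := by
  rw [comm_zpow_right hcl hexp]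
  have hd : a = 2 * (a / 2) + a % 2 := (Int.mul_ediv_add_emod a 2).symm
  have hsq2 : ⁅x, y⁆ ^ (2 : ℤ) = 1 := by
    rw [show (2 : ℤ) = ((2 : ℕ) : ℤ) by norm_num, zpow_natCast, comm_sq hcl hexp]
  have h2 : ⁅x, y⁆ ^ (2 * (a / 2)) = 1 := by
    rw [zpow_mul, hsq2, one_zpow]
  rcases Int.emod_two_eq a with h | h <;> rw [h] <;>
    rw [show a = 2 * (a / 2) + a % 2 from hd, zpow_add, h2, one_mul, h] <;> norm_num


end class2

section lists
variable {ι : Type*} [DecidableEq ι]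

/-- evaluation of a word -/
def ev (g : ι → G) (L : List (ι × Bool)) : G :=
  (L.map fun x => bif x.2 then g x.1 else (g x.1)⁻¹).prod

/-- product of commutators indexed by pairs -/
def cprod (g : ι → G) (P : List (ι × ι)) : G :=
  (P.map fun q => ⁅g q.1, g q.2⁆).prod

@[simp] lemma ev_nil (g : ι → G) : ev g [] = 1 := rfl

lemma ev_cons (g : ι → G) (p : ι × Bool) (L : List (ι × Bool)) :
    ev g (p :: L) = (bif p.2 then g p.1 else (g p.1)⁻¹) * ev g L := by
  simp [ev]

@[simp] lemma cprod_nil (g : ι → G) : cprod g [] = 1 := rfl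

lemma cprod_cons (g : ι → G) (q : ι × ι) (P : List (ι × ι)) :
    cprod g (q :: P) = ⁅g q.1, g q.2⁆ * cprod g P := by
  simp [cprod]

lemma cprod_append (g : ι → G) (P Q : List (ι × ι)) :
    cprod g (P ++ Q) = cprod g P * cprod g Q := by
  simp [cprod]

/-- extract all occurrences of the letter `i`, returning the signed exponent count,
the remaining word, and commutator corrections. -/
def extract (i : ι) : List (ι × Bool) → ℤ × List (ι × Bool) × List (ι × ι)
  | [] => (0, [], [])
  | (j, b) :: L =>
    let r := extract i L
    if j = i then (r.1 + (if b then 1 else -1), r.2.1, r.2.2)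
    else if r.1 % 2 = 0 then (r.1, (j, b) :: r.2.1, r.2.2)
    else (r.1, (j, b) :: r.2.1, (j, i) :: r.2.2)

lemma extract_cons_self (i : ι) (b : Bool) (L : List (ι × Bool)) :
    extract i ((i, b) :: L) =
      ((extract i L).1 + (if b then 1 else -1), (extract i L).2.1, (extract i L).2.2) := by
  simp [extract]

lemma extract_cons_ne_even (i j : ι) (hj : j ≠ i) (b : Bool) (L : List (ι × Bool))
    (h : (extract i L).1 % 2 = 0) :
    extract i ((j, b) :: L) =
      ((extract i L).1, (j, b) :: (extract i L).2.1, (extract i L).2.2) := by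
  simp [extract, hj, h]

lemma extract_cons_ne_odd (i j : ι) (hj : j ≠ i) (b : Bool) (L : List (ι × Bool))
    (h : ¬ (extract i L).1 % 2 = 0) :
    extract i ((j, b) :: L) =
      ((extract i L).1, (j, b) :: (extract i L).2.1, (j, i) :: (extract i L).2.2) := by
  simp [extract, hj, h]

lemma extract_length (i : ι) (L : List (ι × Bool)) :
    (extract i L).2.1.length ≤ L.length := by
  induction L with
  | nil => simp [extract]
  | cons p L ih =>
    obtain ⟨j, b⟩ := p
    by_cases hj : j = i
    · subst hj; rw [extract_cons_self]
      exact le_trans ih (Nat.le_succ _)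
    · by_cases h : (extract i L).1 % 2 = 0
      · rw [extract_cons_ne_even i j hj b L h]; simpa using ih
      · rw [extract_cons_ne_odd i j hj b L h]; simpa using ih

lemma extract_fst_ne (i : ι) (L : List (ι × Bool)) :
    ∀ p ∈ (extract i L).2.1, p.1 ≠ i := by
  induction L with
  | nil => simp [extract]
  | cons p L ih =>
    obtain ⟨j, b⟩ := p
    by_cases hj : j = i
    · subst hj; rw [extract_cons_self]; exact ih
    · by_cases h : (extract i L).1 % 2 = 0
      · rw [extract_cons_ne_even i j hj b L h]
        intro q hq
        rcases List.mem_cons.mp hq with h' | h'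
        · subst h'; exact hj
        · exact ih q h'
      · rw [extract_cons_ne_odd i j hj b L h]
        intro q hq
        rcases List.mem_cons.mp hq with h' | h'
        · subst h'; exact hj
        · exact ih q h'

lemma extract_mem (i : ι) (L : List (ι × Bool)) :
    ∀ p ∈ (extract i L).2.1, p ∈ L := by
  induction L with
  | nil => simp [extract]
  | cons p L ih =>
    obtain ⟨j, b⟩ := p
    by_cases hj : j = i
    · subst hj; rw [extract_cons_self]
      intro q hq; exact List.mem_cons_of_mem _ (ih q hq)
    · by_cases h : (extract i L).1 % 2 = 0
      · rw [extract_cons_ne_even i j hj b L h]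
        intro q hq
        rcases List.mem_cons.mp hq with h' | h'
        · subst h'; exact List.mem_cons_self
        · exact List.mem_cons_of_mem _ (ih q h')
      · rw [extract_cons_ne_odd i j hj b L h]
        intro q hq
        rcases List.mem_cons.mp hq with h' | h'
        · subst h'; exact List.mem_cons_self
        · exact List.mem_cons_of_mem _ (ih q h')

lemma extract_pairs_ne (i : ι) (L : List (ι × Bool)) :
    ∀ q ∈ (extract i L).2.2, q.1 ≠ q.2 := by
  induction L with
  | nil => simp [extract]
  | cons p L ih =>
    obtain ⟨j, b⟩ := p
    by_cases hj : j = i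
    · subst hj; rw [extract_cons_self]; exact ih
    · by_cases h : (extract i L).1 % 2 = 0
      · rw [extract_cons_ne_even i j hj b L h]; exact ih
      · rw [extract_cons_ne_odd i j hj b L h]
        intro q hq
        rcases List.mem_cons.mp hq with h' | h'
        · subst h'; exact hj
        · exact ih q h'

lemma bif_eq_zpow (x : G) (b : Bool) :
    (bif b then x else x⁻¹) = x ^ (if b then (1 : ℤ) else -1) := by
  cases b <;> simp

section spec
variable (hcl : ∀ a b c : G, ⁅⁅a, b⁆, c⁆ = 1) (hexp : ∀ g : G, g ^ 4 = 1)
include hcl hexp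

lemma extract_spec (g : ι → G) (i : ι) (L : List (ι × Bool)) :
    ev g L = g i ^ (extract i L).1 * ev g (extract i L).2.1 * cprod g (extract i L).2.2 := by
  induction L with
  | nil => simp [extract]
  | cons p L ih =>
    obtain ⟨j, b⟩ := p
    rw [ev_cons]
    by_cases hj : j = i
    · subst hj
      rw [extract_cons_self, ih, bif_eq_zpow]
      simp only
      rw [← mul_assoc, ← mul_assoc, ← zpow_add, add_comm]
    · set a := (extract i L).1 with ha
      set R := (extract i L).2.1 with hR
      set P := (extract i L).2.2 with hP
      by_cases hpar : a % 2 = 0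
      · rw [extract_cons_ne_even i j hj b L hpar, ih]
        set t := (bif b then g j else (g j)⁻¹) with ht
        have hcomm : t * g i ^ a = g i ^ a * t := by
          have h1 : ⁅t, g i ^ a⁆ = 1 := by
            have h3 : ⁅g j, g i ^ a⁆ = 1 := by
              have := comm_zpow_parity hcl hexp (g j) (g i) a
              rw [if_pos hpar] at this; exact this
            cases b with
            | true => simpa [ht] using h3
            | false =>
              have h1 : ⁅(g j)⁻¹, g i ^ a⁆ = ⁅g i ^ a, g j⁆ := comm_inv_left' hcl hexp (g j) _
              have h2 : ⁅g i ^ a, g j⁆ = ⁅g j, g i ^ a⁆ := comm_symm hcl hexp _ _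
              simp only [ht]
              rw [show (bif false then g j else (g j)⁻¹) = (g j)⁻¹ from rfl, h1, h2, h3]
          exact commutatorElement_eq_one_iff_mul_comm.mp h1
        simp only
        rw [ev_cons, ← ht, ← mul_assoc, ← mul_assoc, ← mul_assoc, hcomm]
      · rw [extract_cons_ne_odd i j hj b L hpar, ih]
        simp only
        rw [cprod_cons]
        set t := (bif b then g j else (g j)⁻¹) with ht
        have hc : ⁅t, g i ^ a⁆ = ⁅g j, g i⁆ := by
          have h3 : ⁅g j, g i ^ a⁆ = ⁅g j, g i⁆ := by
            have := comm_zpow_parity hcl hexp (g j) (g i) a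
            rw [if_neg hpar] at this; exact this
          cases b with
          | true => simpa [ht] using h3
          | false =>
            have h1 : ⁅(g j)⁻¹, g i ^ a⁆ = ⁅g i ^ a, g j⁆ := comm_inv_left' hcl hexp (g j) _
            have h2 : ⁅g i ^ a, g j⁆ = ⁅g j, g i ^ a⁆ := comm_symm hcl hexp _ _
            simp only [ht]
            rw [show (bif false then g j else (g j)⁻¹) = (g j)⁻¹ from rfl, h1, h2, h3]
        have hswap : t * g i ^ a = ⁅t, g i ^ a⁆ * (g i ^ a * t) := by group
        have hcentr : ∀ w : G, ⁅g j, g i⁆ * w = w * ⁅g j, g i⁆ :=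
          fun w => (comm_central hcl (g j) (g i) w).eq
        have hmove : ∀ x y : G, ⁅g j, g i⁆ * (x * y) = x * (⁅g j, g i⁆ * y) := by
          intro x y; rw [← mul_assoc, hcentr x, mul_assoc]
        calc t * (g i ^ a * ev g R * cprod g P)
            = (t * g i ^ a) * (ev g R * cprod g P) := by simp only [mul_assoc]
          _ = ⁅g j, g i⁆ * (g i ^ a * (t * (ev g R * cprod g P))) := by
              rw [hswap, hc]; simp only [mul_assoc]
          _ = g i ^ a * (t * (ev g R * (⁅g j, g i⁆ * cprod g P))) := by
              rw [hmove, hmove, hmove]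
          _ = g i ^ a * ev g ((j, b) :: R) * (⁅g j, g i⁆ * cprod g P) := by
              rw [ev_cons, ← ht]; simp only [mul_assoc]

end spec

/-- normal form with fuel: grouped exponents and commutator pairs. -/
def nfAux : ℕ → List (ι × Bool) → List (ι × ℤ) × List (ι × ι)
  | 0, _ => ([], [])
  | _ + 1, [] => ([], [])
  | n + 1, (i, b) :: L =>
    let r := extract i L
    let s := nfAux n r.2.1
    ((i, (if b then 1 else -1) + r.1) :: s.1, r.2.2 ++ s.2)

def nf (L : List (ι × Bool)) : List (ι × ℤ) × List (ι × ι) := nfAux L.length L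

/-- evaluation of grouped exponents -/
def evz (g : ι → G) (E : List (ι × ℤ)) : G :=
  (E.map fun p => g p.1 ^ p.2).prod

@[simp] lemma evz_nil (g : ι → G) : evz g [] = 1 := rfl

lemma evz_cons (g : ι → G) (p : ι × ℤ) (E : List (ι × ℤ)) :
    evz g (p :: E) = g p.1 ^ p.2 * evz g E := by simp [evz]

lemma nfAux_fst_mem : ∀ (n : ℕ) (L : List (ι × Bool)),
    ∀ p ∈ (nfAux n L).1, p.1 ∈ L.map Prod.fst := by
  intro n
  induction n with
  | zero => intro L; simp [nfAux]
  | succ n ih =>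
    intro L
    match L with
    | [] => simp [nfAux]
    | (i, b) :: L =>
      simp only [nfAux]
      intro p hp
      rcases List.mem_cons.mp hp with h | h
      · subst h; simp
      · have h2 := ih _ p h
        obtain ⟨q, hq, hq2⟩ := List.mem_map.mp h2
        have h3 : q ∈ L := extract_mem i L q hq
        simp only [List.map_cons, List.mem_cons]
        right
        exact List.mem_map.mpr ⟨q, h3, hq2⟩

lemma nfAux_nodup : ∀ (n : ℕ) (L : List (ι × Bool)),
    (((nfAux n L).1).map Prod.fst).Nodup := by
  intro n
  induction n with
  | zero => intro L; simp [nfAux]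
  | succ n ih =>
    intro L
    match L with
    | [] => simp [nfAux]
    | (i, b) :: L =>
      simp only [nfAux, List.map_cons, List.nodup_cons]
      constructor
      · intro hmem
        obtain ⟨p, hp, hp2⟩ := List.mem_map.mp hmem
        have h3 := nfAux_fst_mem n _ p hp
        obtain ⟨q, hq, hq2⟩ := List.mem_map.mp h3
        have h4 : q.1 ≠ i := extract_fst_ne i L q hq
        exact h4 (hq2.trans hp2)
      · exact ih _

lemma nfAux_pairs_ne : ∀ (n : ℕ) (L : List (ι × Bool)),
    ∀ q ∈ (nfAux n L).2, q.1 ≠ q.2 := by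
  intro n
  induction n with
  | zero => intro L; simp [nfAux]
  | succ n ih =>
    intro L
    match L with
    | [] => simp [nfAux]
    | (i, b) :: L =>
      simp only [nfAux]
      intro q hq
      rcases List.mem_append.mp hq with h | h
      · exact extract_pairs_ne i L q h
      · exact ih _ q h

lemma nf_nodup (L : List (ι × Bool)) : (((nf L).1).map Prod.fst).Nodup := nfAux_nodup _ L

lemma nf_pairs_ne (L : List (ι × Bool)) : ∀ q ∈ (nf L).2, q.1 ≠ q.2 := nfAux_pairs_ne _ L

section spec2
variable (hcl : ∀ a b c : G, ⁅⁅a, b⁆, c⁆ = 1) (hexp : ∀ g : G, g ^ 4 = 1)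
include hcl hexp

lemma cprod_central (g : ι → G) (P : List (ι × ι)) (w : G) :
    cprod g P * w = w * cprod g P := by
  induction P with
  | nil => simp
  | cons q P ih =>
    rw [cprod_cons, mul_assoc, ih, ← mul_assoc, ← mul_assoc,
      (comm_central hcl (g q.1) (g q.2) w).eq]

lemma nfAux_spec (g : ι → G) : ∀ (n : ℕ) (L : List (ι × Bool)), L.length ≤ n →
    ev g L = evz g (nfAux n L).1 * cprod g (nfAux n L).2 := by
  intro n
  induction n with
  | zero =>
    intro L hL
    rw [List.length_eq_zero_iff.mp (Nat.le_zero.mp hL)]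
    simp [nfAux]
  | succ n ih =>
    intro L hL
    match L with
    | [] => simp [nfAux]
    | (i, b) :: L =>
      have hlen : (extract i L).2.1.length ≤ n := by
        have := extract_length i L
        simp only [List.length_cons] at hL
        omega
      simp only [nfAux]
      rw [ev_cons, extract_spec hcl hexp g i L, ih _ hlen, evz_cons, cprod_append]
      simp only
      rw [bif_eq_zpow, ← mul_assoc, ← mul_assoc, ← zpow_add]
      set A := g i ^ ((if b then (1:ℤ) else -1) + (extract i L).1)
      set B := evz g (nfAux n (extract i L).2.1).1
      set C := cprod g (nfAux n (extract i L).2.1).2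
      set D := cprod g (extract i L).2.2
      calc A * (B * C) * D = A * B * (C * D) := by simp only [mul_assoc]
        _ = A * B * (D * C) := by rw [cprod_central hcl hexp]

lemma nf_spec (g : ι → G) (L : List (ι × Bool)) :
    ev g L = evz g (nf L).1 * cprod g (nf L).2 := nfAux_spec hcl hexp g _ L le_rfl

end spec2
end lists

section d4
open DihedralGroup

lemma d4_exp : ∀ x : DihedralGroup 4, x ^ 4 = 1 := by decide

lemma d4_cl : ∀ a b c : DihedralGroup 4, ⁅⁅a, b⁆, c⁆ = 1 := by decide

/-- generic: x^a = 1 when x^4 = 1 and 4 ∣ a -/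
lemma zpow_of_dvd_four {H : Type*} [Group H] (x : H) (h4 : x ^ 4 = 1) {a : ℤ}
    (ha : (4 : ℤ) ∣ a) : x ^ a = 1 := by
  obtain ⟨k, rfl⟩ := ha
  rw [zpow_mul, show ((4 : ℤ) = ((4 : ℕ) : ℤ)) by norm_num, zpow_natCast, h4, one_zpow]

lemma r_zpow_dvd {a : ℤ} (h : (r 1 : DihedralGroup 4) ^ a = 1) : (4 : ℤ) ∣ a := by
  have hd : a = 4 * (a / 4) + a % 4 := (Int.mul_ediv_add_emod a 4).symm
  have h4 : (r 1 : DihedralGroup 4) ^ ((4 : ℤ) * (a / 4)) = 1 := by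
    rw [zpow_mul, show ((4 : ℤ) = ((4 : ℕ) : ℤ)) by norm_num, zpow_natCast, d4_exp, one_zpow]
  have hm : (r 1 : DihedralGroup 4) ^ (a % 4) = 1 := by
    calc (r 1 : DihedralGroup 4) ^ (a % 4)
        = (r 1 : DihedralGroup 4) ^ ((4 : ℤ) * (a / 4)) * (r 1 : DihedralGroup 4) ^ (a % 4) := by
          rw [h4, one_mul]
      _ = (r 1 : DihedralGroup 4) ^ ((4 : ℤ) * (a / 4) + a % 4) := by rw [zpow_add]
      _ = 1 := by rw [← hd]; exact h
  have h0 : (0 : ℤ) ≤ a % 4 := Int.emod_nonneg a (by norm_num)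
  have h1 : a % 4 < 4 := Int.emod_lt_of_pos a (by norm_num)
  have hn : (r 1 : DihedralGroup 4) ^ ((a % 4).toNat) = 1 := by
    rw [← zpow_natCast, Int.toNat_of_nonneg h0]; exact hm
  have hcases : (a % 4).toNat = 0 ∨ (a % 4).toNat = 1 ∨ (a % 4).toNat = 2 ∨ (a % 4).toNat = 3 := by
    omega
  have hzero : a % 4 = 0 := by
    rcases hcases with h' | h' | h' | h' <;> rw [h'] at hn
    · omega
    all_goals (exfalso; revert hn; decide)
  exact Int.dvd_of_emod_eq_zero hzero

lemma z_pow_even {n : ℕ} (h : (r 2 : DihedralGroup 4) ^ n = 1) : Even n := by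
  have hd : n = 2 * (n / 2) + n % 2 := (Nat.div_add_mod n 2).symm
  have h2 : (r 2 : DihedralGroup 4) ^ (2 * (n / 2)) = 1 := by
    rw [pow_mul, show ((r 2 : DihedralGroup 4) ^ 2 = 1) by decide, one_pow]
  have hm : (r 2 : DihedralGroup 4) ^ (n % 2) = 1 := by
    calc (r 2 : DihedralGroup 4) ^ (n % 2)
        = (r 2 : DihedralGroup 4) ^ (2 * (n / 2)) * (r 2 : DihedralGroup 4) ^ (n % 2) := by
          rw [h2, one_mul]
      _ = (r 2 : DihedralGroup 4) ^ (2 * (n / 2) + n % 2) := by rw [pow_add]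
      _ = 1 := by rw [← hd]; exact h
  have : n % 2 = 0 ∨ n % 2 = 1 := by omega
  rcases this with h' | h'
  · exact (Nat.even_iff).mpr h'
  · rw [h'] at hm; exfalso; revert hm; decide

variable {ι : Type*} [DecidableEq ι]

/-- the map sending `i0` to `r 1` and everything else to `1`. -/
def fone (i0 : ι) : ι → DihedralGroup 4 := fun t => if t = i0 then r 1 else 1

/-- the map sending `x0` to `r 1`, `y0` to `sr 0` and everything else to `1`. -/
def fpair (x0 y0 : ι) : ι → DihedralGroup 4 :=
  fun t => if t = x0 then r 1 else if t = y0 then sr 0 else 1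

lemma evz_fone_of_not_mem (i0 : ι) (E : List (ι × ℤ)) (h : ∀ p ∈ E, p.1 ≠ i0) :
    evz (fone i0) E = 1 := by
  induction E with
  | nil => simp
  | cons p E ih =>
    rw [evz_cons]
    have h1 : fone i0 p.1 = 1 := by
      simp only [fone, if_neg (h p (List.mem_cons_self))]
    rw [h1, one_zpow, one_mul]
    exact ih fun q hq => h q (List.mem_cons_of_mem _ hq)

lemma evz_fone (E : List (ι × ℤ)) (hnd : (E.map Prod.fst).Nodup) (p0 : ι × ℤ) (hp0 : p0 ∈ E) :
    evz (fone p0.1) E = (r 1 : DihedralGroup 4) ^ p0.2 := by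
  induction E with
  | nil => simp at hp0
  | cons p E ih =>
    simp only [List.map_cons, List.nodup_cons] at hnd
    rcases List.mem_cons.mp hp0 with h | h
    · subst h
      rw [evz_cons]
      have h1 : fone p0.1 p0.1 = r 1 := by simp [fone]
      rw [h1, evz_fone_of_not_mem p0.1 E (fun q hq hq2 => hnd.1 (List.mem_map.mpr ⟨q, hq, hq2⟩)),
        mul_one]
    · rw [evz_cons]
      have hne : p.1 ≠ p0.1 := by
        intro he
        exact hnd.1 (he ▸ List.mem_map.mpr ⟨p0, h, rfl⟩)
      have h1 : fone p0.1 p.1 = 1 := by simp [fone, hne]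
      rw [h1, one_zpow, one_mul]
      exact ih hnd.2 h

lemma cprod_fone (i0 : ι) (P : List (ι × ι)) : cprod (fone i0) P = 1 := by
  induction P with
  | nil => simp
  | cons q P ih =>
    rw [cprod_cons, ih, mul_one]
    have h1 : ∀ s t : ι, ⁅fone i0 s, fone i0 t⁆ = 1 := by
      intro s t
      unfold fone
      split <;> split <;> decide
    exact h1 _ _

lemma evz_fpair (x0 y0 : ι) (E : List (ι × ℤ)) (hdvd : ∀ p ∈ E, (4 : ℤ) ∣ p.2) :
    evz (fpair x0 y0) E = 1 := by
  induction E with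
  | nil => simp
  | cons p E ih =>
    rw [evz_cons, zpow_of_dvd_four _ (d4_exp _) (hdvd p (List.mem_cons_self)), one_mul]
    exact ih fun q hq => hdvd q (List.mem_cons_of_mem _ hq)

lemma comm_fpair (x0 y0 : ι) (hne : x0 ≠ y0) (u v : ι) (huv : u ≠ v) :
    ⁅fpair x0 y0 u, fpair x0 y0 v⁆ =
      if s(u, v) = s(x0, y0) then (r 2 : DihedralGroup 4) else 1 := by
  unfold fpair
  by_cases h1 : u = x0
  · rw [if_pos h1]
    by_cases h4 : v = y0
    · rw [if_neg (fun h : v = x0 => hne (h.symm.trans h4)), if_pos h4,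
        if_pos (Sym2.eq_iff.mpr (Or.inl ⟨h1, h4⟩))]
      decide
    · have h3 : ¬ v = x0 := fun h => huv (h1.trans h.symm)
      have hc : ¬ s(u, v) = s(x0, y0) := fun h => by
        rcases Sym2.eq_iff.mp h with ⟨_, h'⟩ | ⟨h', _⟩
        exacts [h4 h', hne (h1.symm.trans h')]
      rw [if_neg h3, if_neg h4, if_neg hc]
      decide
  · by_cases h2 : u = y0
    · rw [if_neg h1, if_pos h2]
      by_cases h3 : v = x0
      · rw [if_pos h3, if_pos (Sym2.eq_iff.mpr (Or.inr ⟨h2, h3⟩))]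
        decide
      · have h4 : ¬ v = y0 := fun h => huv (h2.trans h.symm)
        have hc : ¬ s(u, v) = s(x0, y0) := fun h => by
          rcases Sym2.eq_iff.mp h with ⟨h', _⟩ | ⟨_, h'⟩
          exacts [h1 h', h3 h']
        rw [if_neg h3, if_neg h4, if_neg hc]
        decide
    · have hc : ¬ s(u, v) = s(x0, y0) := fun h => by
        rcases Sym2.eq_iff.mp h with ⟨h', _⟩ | ⟨h', _⟩
        exacts [h1 h', h2 h']
      rw [if_neg h1, if_neg h2, commutatorElement_one_left, if_neg hc]

lemma cprod_fpair (x0 y0 : ι) (hne : x0 ≠ y0) (P : List (ι × ι)) (hP : ∀ q ∈ P, q.1 ≠ q.2) :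
    cprod (fpair x0 y0) P =
      (r 2 : DihedralGroup 4) ^ (List.count s(x0, y0) (P.map fun q => s(q.1, q.2))) := by
  induction P with
  | nil => simp
  | cons q P ih =>
    rw [cprod_cons, comm_fpair x0 y0 hne q.1 q.2 (hP q (List.mem_cons_self)),
      ih (fun p hp => hP p (List.mem_cons_of_mem _ hp)), List.map_cons, List.count_cons]
    by_cases h : s(q.1, q.2) = s(x0, y0)
    · rw [if_pos h, if_pos (by exact beq_iff_eq.mpr h), pow_succ]
      exact ((Commute.refl (r 2 : DihedralGroup 4)).pow_right _).eq
    · rw [if_neg h, if_neg (by simp [h]), one_mul, add_zero]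

end d4

section main
variable {G : Type*} [Group G] {ι : Type*} [DecidableEq ι]
variable (hcl : ∀ a b c : G, ⁅⁅a, b⁆, c⁆ = 1) (hexp : ∀ g : G, g ^ 4 = 1)
include hcl hexp

lemma comm_mem_center (g : ι → G) (x y : ι) : ⁅g x, g y⁆ ∈ Subgroup.center G :=
  Subgroup.mem_center_iff.mpr fun w => ((comm_central hcl (g x) (g y) w).eq).symm

open scoped IsMulCommutative in
lemma cprod_eq_one (g : ι → G) (P : List (ι × ι)) (hP : ∀ q ∈ P, q.1 ≠ q.2)
    (hev : ∀ x0 y0 : ι, x0 ≠ y0 →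
      Even (List.count s(x0, y0) (P.map fun q => s(q.1, q.2)))) :
    cprod g P = 1 := by
  classical
  set Z := Subgroup.center G
  have hmem : ∀ x y : ι, ⁅g x, g y⁆ ∈ Z := comm_mem_center hcl hexp g
  set CS : Sym2 ι → Z := Sym2.lift ⟨fun x y => ⟨⁅g x, g y⁆, hmem x y⟩,
    fun x y => Subtype.ext (comm_symm hcl hexp (g y) (g x))⟩ with hCS
  -- rewrite cprod as image of a product in the center
  have key : cprod g P = (Z.subtype) (((P.map fun q => s(q.1, q.2)).map CS).prod) := by
    rw [map_list_prod, List.map_map, List.map_map]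
    unfold cprod
    congr 1
  rw [key]
  -- now show the product in the center is 1
  have hprod : ((P.map fun q => s(q.1, q.2)).map CS).prod = 1 := by
    have hlist : ((P.map fun q => s(q.1, q.2)).map CS).prod =
        (Multiset.map CS ((P.map fun q => s(q.1, q.2)) : Multiset (Sym2 ι))).prod := by
      rw [Multiset.map_coe, Multiset.prod_coe]
    rw [hlist, Finset.prod_multiset_map_count]
    apply Finset.prod_eq_one
    intro z hz
    have hz' : z ∈ ((P.map fun q => s(q.1, q.2)) : Multiset (Sym2 ι)) :=
      Multiset.mem_toFinset.mp hz
    have hz'' : z ∈ P.map fun q => s(q.1, q.2) := by exact_mod_cast hz'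
    obtain ⟨q, hq, rfl⟩ := List.mem_map.mp hz''
    have hqne : q.1 ≠ q.2 := hP q hq
    have hcount : Even (Multiset.count s(q.1, q.2)
        ((P.map fun q => s(q.1, q.2)) : Multiset (Sym2 ι))) := by
      rw [Multiset.coe_count]
      exact hev q.1 q.2 hqne
    obtain ⟨k, hk⟩ := hcount
    have hsq : CS s(q.1, q.2) ^ 2 = 1 := by
      apply Subtype.ext
      have h1 : ((CS s(q.1, q.2) : Z) : G) = ⁅g q.1, g q.2⁆ := by
        rw [hCS, Sym2.lift_mk]
      push_cast
      rw [h1]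
      exact comm_sq hcl hexp (g q.1) (g q.2)
    rw [hk, ← two_mul, pow_mul, hsq, one_pow]
  rw [hprod, map_one]

theorem main_residual (L : List (ι × Bool))
    (hD4 : ∀ f : ι → DihedralGroup 4, ev f L = 1) (g : ι → G) :
    ev g L = 1 := by
  classical
  have hnodup := nf_nodup L
  have hpne := nf_pairs_ne L
  -- step A : all grouped exponents are divisible by 4
  have hdvd : ∀ p ∈ (nf L).1, (4 : ℤ) ∣ p.2 := by
    intro p hp
    have h1 := hD4 (fone p.1)
    rw [nf_spec d4_cl d4_exp (fone p.1) L, cprod_fone, mul_one,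
      evz_fone (nf L).1 hnodup p hp] at h1
    exact r_zpow_dvd h1
  -- step B : each unordered commutator pair occurs evenly
  have heven : ∀ x0 y0 : ι, x0 ≠ y0 →
      Even (List.count s(x0, y0) ((nf L).2.map fun q => s(q.1, q.2))) := by
    intro x0 y0 hne
    have h1 := hD4 (fpair x0 y0)
    rw [nf_spec d4_cl d4_exp (fpair x0 y0) L, evz_fpair x0 y0 (nf L).1 hdvd, one_mul,
      cprod_fpair x0 y0 hne (nf L).2 hpne] at h1
    exact z_pow_even h1
  -- conclude
  rw [nf_spec hcl hexp g L]
  have hE : evz g (nf L).1 = 1 := by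
    apply List.prod_eq_one
    intro x hx
    obtain ⟨p, hp, rfl⟩ := List.mem_map.mp hx
    exact zpow_of_dvd_four (g p.1) (hexp (g p.1)) (hdvd p hp)
  have hP : cprod g (nf L).2 = 1 := cprod_eq_one hcl hexp g (nf L).2 hpne heven
  rw [hE, hP, one_mul]

end main

lemma lift_eq_ev {α : Type*} [DecidableEq α] {H : Type*} [Group H] (f : α → H) (w : FreeGroup α) :
    FreeGroup.lift f w = ev f w.toWord := by
  conv_lhs => rw [← FreeGroup.mk_toWord (x := w)]
  rw [FreeGroup.lift_mk]
  rfl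

section nilp
variable {G : Type*} [Group G]

lemma lcs_two_eq_bot_of_hcl (hcl : ∀ a b c : G, ⁅⁅a, b⁆, c⁆ = 1) :
    Subgroup.lowerCentralSeries (⊤ : Subgroup G) 2 = ⊥ := by
  have h1 : Subgroup.lowerCentralSeries (⊤ : Subgroup G) 1 ≤ Subgroup.center G := by
    rw [Subgroup.top_lowerCentralSeries_one]
    apply Subgroup.commutator_le.mpr
    intro x _ y _
    exact Subgroup.mem_center_iff.mpr fun w => ((comm_central hcl x y w).eq).symm
  have h2 : Subgroup.lowerCentralSeries (⊤ : Subgroup G) 2 = ⁅Subgroup.lowerCentralSeries (⊤ : Subgroup G) 1, (⊤ : Subgroup G)⁆ :=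
    Subgroup.lowerCentralSeries_succ _ 1
  rw [eq_bot_iff, h2]
  calc ⁅Subgroup.lowerCentralSeries (⊤ : Subgroup G) 1, (⊤ : Subgroup G)⁆ ≤ ⁅Subgroup.center G, (⊤ : Subgroup G)⁆ :=
        Subgroup.commutator_mono h1 le_rfl
    _ ≤ ⊥ := by
        apply Subgroup.commutator_le.mpr
        intro x hx y _
        rw [Subgroup.mem_bot]
        exact commutatorElement_eq_one_iff_mul_comm.mpr
          ((Subgroup.mem_center_iff.mp hx y).symm)

lemma hcl_of_lcs_two_eq_bot (h : Subgroup.lowerCentralSeries (⊤ : Subgroup G) 2 = ⊥) :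
    ∀ a b c : G, ⁅⁅a, b⁆, c⁆ = 1 := by
  intro a b c
  have h1 : ⁅a, b⁆ ∈ Subgroup.lowerCentralSeries (⊤ : Subgroup G) 1 := by
    rw [Subgroup.top_lowerCentralSeries_one]
    exact Subgroup.commutator_mem_commutator (Subgroup.mem_top a) (Subgroup.mem_top b)
  have h2 : ⁅⁅a, b⁆, c⁆ ∈ Subgroup.lowerCentralSeries (⊤ : Subgroup G) 2 := by
    rw [Subgroup.lowerCentralSeries_succ]
    exact Subgroup.commutator_mem_commutator h1 (Subgroup.mem_top c)
  rw [h] at h2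
  exact Subgroup.mem_bot.mp h2

end nilp

end GD4

/-- A finite group is of generalized `D₄`-type if and only if its exponent divides 4 and it is
nilpotent of nilpotency class at most 2. -/
theorem isGenD4Type_iff_exponent_dvd_four_and_nilpotencyClass_le_two
    (G : Type*) [Group G] [Finite G] :
    IsGenD4Type G ↔
      Monoid.exponent G ∣ 4 ∧
        ∃ h : Group.IsNilpotent G, Group.nilpotencyClass G ≤ 2 := by
  constructor
  · rintro ⟨n, H, f, hf⟩
    have h4 : ∀ g : G, g ^ 4 = 1 := by
      intro g
      obtain ⟨x, rfl⟩ := hf g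
      rw [← map_pow]
      have hx : x ^ 4 = 1 := by
        apply Subtype.ext
        push_cast
        funext k
        exact GD4.d4_exp _
      rw [hx, map_one]
    have hcl : ∀ a b c : G, ⁅⁅a, b⁆, c⁆ = 1 := by
      intro a b c
      obtain ⟨x, rfl⟩ := hf a
      obtain ⟨y, rfl⟩ := hf b
      obtain ⟨z, rfl⟩ := hf c
      rw [← map_commutatorElement, ← map_commutatorElement]
      have hx : ⁅⁅x, y⁆, z⁆ = 1 := by
        apply Subtype.ext
        have hco : ((⁅⁅x, y⁆, z⁆ : H) : Fin n → D4) =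
            ⁅⁅(x : Fin n → D4), (y : Fin n → D4)⁆, (z : Fin n → D4)⁆ := by
          show H.subtype ⁅⁅x, y⁆, z⁆ = _
          rw [map_commutatorElement, map_commutatorElement]
          rfl
        rw [hco]
        funext k
        exact GD4.d4_cl (x.1 k) (y.1 k) (z.1 k)
      rw [hx, map_one]
    refine ⟨Monoid.exponent_dvd_of_forall_pow_eq_one h4, ?_⟩
    have hb := GD4.lcs_two_eq_bot_of_hcl hcl
    have hnil : Group.IsNilpotent G := Subgroup.nilpotent_iff_lowerCentralSeries.mpr ⟨2, hb⟩
    haveI := hnil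
    exact ⟨hnil, Subgroup.lowerCentralSeries_eq_bot_iff_nilpotencyClass_le.mp hb⟩
  · rintro ⟨hexp, hnil, hclass⟩
    classical
    haveI := hnil
    have h4 : ∀ g : G, g ^ 4 = 1 := by
      intro g
      obtain ⟨k, hk⟩ := hexp
      rw [hk, pow_mul, Monoid.pow_exponent_eq_one, one_pow]
    have hcl : ∀ a b c : G, ⁅⁅a, b⁆, c⁆ = 1 :=
      GD4.hcl_of_lcs_two_eq_bot (Subgroup.lowerCentralSeries_eq_bot_iff_nilpotencyClass_le.mpr hclass)
    haveI : Fintype (G → D4) := Fintype.ofFinite _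
    set n := Fintype.card (G → D4) with hn
    set e : (G → D4) ≃ Fin n := Fintype.equivFin (G → D4) with he
    set π : FreeGroup G →* G := FreeGroup.lift id with hπ
    set ψ : FreeGroup G →* (Fin n → D4) :=
      Pi.monoidHom (fun k => FreeGroup.lift (e.symm k)) with hψ
    have hker : ∀ w ∈ ψ.ker, π w = 1 := by
      intro w hw
      have hall : ∀ f : G → D4, FreeGroup.lift f w = 1 := by
        intro f
        have h1 : ψ w = 1 := hw
        have h2 : ψ w (e f) = 1 := congrFun h1 (e f)
        have h3 : FreeGroup.lift (e.symm (e f)) w = 1 := h2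
        rwa [e.symm_apply_apply] at h3
      have hD4' : ∀ f : G → D4, GD4.ev f w.toWord = 1 := fun f => by
        rw [← GD4.lift_eq_ev]; exact hall f
      have hmain := GD4.main_residual hcl h4 w.toWord hD4' id
      rw [hπ, GD4.lift_eq_ev]
      exact hmain
    set q : FreeGroup G ⧸ ψ.ker →* G := QuotientGroup.lift ψ.ker π (fun w hw => MonoidHom.mem_ker.mpr (hker w hw)) with hq
    have hqs : Function.Surjective q := by
      intro g
      refine ⟨((FreeGroup.of g : FreeGroup G) : FreeGroup G ⧸ ψ.ker), ?_⟩
      rw [hq, QuotientGroup.lift_mk, hπ]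
      exact FreeGroup.lift_apply_of
    exact ⟨n, ψ.range, q.comp (QuotientGroup.quotientKerEquivRange ψ).symm.toMonoidHom,
      hqs.comp (QuotientGroup.quotientKerEquivRange ψ).symm.surjective⟩
end
end

section
/- For every positive integer n, the cyclotomic field ℚ(ζₙ) (the subfield of ℚ̄ generated by a primitive n-th root of unity) is contained in ℚ(D₄^∞) if and only if n divides 240. -/
noncomputable section

set_option maxHeartbeats 1000000
set_option synthInstance.maxHeartbeats 400000

open IntermediateField Polynomial

instance Qbar.isAlg : Algebra.IsAlgebraic ℚ Qbar := by
  have h : @Eq (Algebra ℚ Qbar) (AlgebraicClosure.instAlgebra ℚ) DivisionRing.toRatAlgebra := Subsingleton.elim _ _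
  have := AlgebraicClosure.isAlgebraic ℚ
  rw [h] at this
  exact this

instance Qbar.isAlgClosure : IsAlgClosure ℚ Qbar := by
  have h : @Eq (Algebra ℚ Qbar) (AlgebraicClosure.instAlgebra ℚ) DivisionRing.toRatAlgebra := Subsingleton.elim _ _
  have := AlgebraicClosure.instIsAlgClosure ℚ
  rw [h] at this
  exact this

instance Qbar.normalClosure_normal (K : IntermediateField ℚ Qbar) :
    Normal ℚ (IntermediateField.normalClosure ℚ K Qbar) :=
  normalClosure.normal ℚ K Qbar

/-! ### Group-theoretic auxiliary lemmas -/

lemma D4_pow_four : ∀ g : D4, g ^ 4 = 1 := by decide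

lemma IsGenD4Type.pow_four {G : Type*} [Group G] (h : IsGenD4Type G) (g : G) : g ^ 4 = 1 := by
  obtain ⟨n, H, f, hf⟩ := h
  obtain ⟨x, rfl⟩ := hf g
  rw [← map_pow]
  convert map_one f
  exact Subtype.ext (funext fun i => D4_pow_four _)

lemma IsGenD4Type.of_surjective {G G' : Type*} [Group G] [Group G'] (h : IsGenD4Type G)
    (φ : G →* G') (hφ : Function.Surjective φ) : IsGenD4Type G' := by
  obtain ⟨n, H, f, hf⟩ := h
  exact ⟨n, H, φ.comp f, hφ.comp hf⟩

lemma IsGenD4Type.of_injective {G : Type*} [Group G] {n : ℕ} (φ : G →* (Fin n → D4))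
    (hφ : Function.Injective φ) : IsGenD4Type G :=
  ⟨n, φ.range, ((MonoidHom.ofInjective hφ).symm : φ.range ≃* G).toMonoidHom,
    (MonoidHom.ofInjective hφ).symm.surjective⟩

/-- An embedding of `ℤ/2` into `D₄`. -/
def embTwo : Multiplicative (ZMod 2) →* D4 where
  toFun := fun x => DihedralGroup.r (2 * (x.toAdd.val : ZMod 4))
  map_one' := by decide
  map_mul' := by decide

/-- An embedding of `ℤ/4` into `D₄`. -/
def embFour : Multiplicative (ZMod 4) →* D4 where
  toFun := fun x => DihedralGroup.r (x.toAdd.val : ZMod 4)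
  map_one' := by decide
  map_mul' := by decide

lemma exists_emb (m : ℕ) (hm : m ∣ 4) :
    ∃ φ : Multiplicative (ZMod m) →* D4, Function.Injective φ := by
  have h4 := Nat.le_of_dvd (by norm_num) hm
  have h0 : 0 < m := Nat.pos_of_dvd_of_pos hm (by norm_num)
  interval_cases m
  · exact ⟨1, fun a b _ => Subsingleton.elim a b⟩
  · exact ⟨embTwo, by decide⟩
  · exact absurd hm (by norm_num)
  · exact ⟨embFour, by decide⟩

/-- Any finite abelian group of exponent dividing `4` is of generalized `D₄`-type. -/
lemma isGenD4Type_of_comm (G : Type*) [CommGroup G] [Finite G] (h : ∀ g : G, g ^ 4 = 1) :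
    IsGenD4Type G := by
  classical
  obtain ⟨ι, hι, d, hd, ⟨e⟩⟩ := CommGroup.equiv_prod_multiplicative_zmod_of_finite G
  have hpow : ∀ y : ((i : ι) → Multiplicative (ZMod (d i))), y ^ 4 = 1 := by
    intro y
    have := congrArg e (h (e.symm y))
    rwa [map_pow, e.apply_symm_apply, map_one] at this
  have hdvd : ∀ i, d i ∣ 4 := by
    intro i
    have h1 := congrFun (hpow (fun j => Multiplicative.ofAdd (1 : ZMod (d j)))) i
    simp only [Pi.pow_apply, Pi.one_apply] at h1
    have h2 := congrArg Multiplicative.toAdd h1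
    rw [toAdd_pow, toAdd_ofAdd, toAdd_one] at h2
    have h3 : ((4 : ℕ) : ZMod (d i)) = 0 := by
      have : ((4 : ℕ) : ZMod (d i)) = (4 : ℕ) • (1 : ZMod (d i)) := by
        rw [nsmul_eq_mul, mul_one]
      rw [this, h2]
    exact (ZMod.natCast_eq_zero_iff 4 (d i)).mp h3
  choose φ hφ using fun i => exists_emb (d i) (hdvd i)
  let q := (Fintype.equivFin ι).symm
  let Ψ : G →* (Fin (Fintype.card ι) → D4) :=
    { toFun := fun g j => φ (q j) (e g (q j)),
      map_one' := by funext j; simp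
      map_mul' := by intro a b; funext j; simp }
  refine IsGenD4Type.of_injective Ψ ?_
  intro a b hab
  apply e.injective
  funext i
  have h2 := hφ _ (congrFun hab ((Fintype.equivFin ι) i))
  rwa [Equiv.symm_apply_apply] at h2

/-! ### Elementary number theory -/

lemma zmod240_units_pow_four : ∀ u : (ZMod 240)ˣ, u ^ 4 = 1 := by
  have e : (ZMod 240)ˣ ≃* (ZMod 16)ˣ × (ZMod 15)ˣ :=
    (Units.mapEquiv (ZMod.chineseRemainder (by norm_num : Nat.Coprime 16 15)).toMulEquiv).trans
      MulEquiv.prodUnits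
  intro u
  have h : ∀ v : (ZMod 16)ˣ × (ZMod 15)ˣ, v ^ 4 = 1 := by decide
  apply e.injective
  rw [map_pow, h (e u), map_one]

lemma dvd240 {n : ℕ} (hn : 0 < n) (hu : ∀ u : (ZMod n)ˣ, u ^ 4 = 1) : n ∣ 240 := by
  haveI : NeZero n := ⟨hn.ne'⟩
  have E : ∀ m : ℕ, m ∣ n → ∀ u : (ZMod m)ˣ, u ^ 4 = 1 := by
    intro m hm u
    obtain ⟨v, rfl⟩ := ZMod.unitsMap_surjective hm u
    rw [← map_pow, hu v, map_one]
  have no32 : ¬ (32 ∣ n) := fun h => by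
    have := E 32 h (ZMod.unitOfCoprime 3 (by norm_num))
    revert this; decide
  have no9 : ¬ (9 ∣ n) := fun h => by
    have := E 9 h (ZMod.unitOfCoprime 2 (by norm_num))
    revert this; decide
  have no25 : ¬ (25 ∣ n) := fun h => by
    have := E 25 h (ZMod.unitOfCoprime 2 (by norm_num))
    revert this; decide
  have small : ∀ p : ℕ, p.Prime → p ∣ n → p ≤ 5 := by
    intro p hp hpn
    haveI : Fact p.Prime := ⟨hp⟩
    obtain ⟨g, hg⟩ := IsCyclic.exists_generator (α := (ZMod p)ˣ)
    have hcard : orderOf g = p - 1 := by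
      rw [orderOf_eq_card_of_forall_mem_zpowers hg, Nat.card_eq_fintype_card,
        ZMod.card_units_eq_totient, Nat.totient_prime hp]
    have : orderOf g ∣ 4 := orderOf_dvd_of_pow_eq_one (E p hpn g)
    have := Nat.le_of_dvd (by norm_num) this
    omega
  have h240 : (240 : ℕ) ≠ 0 := by norm_num
  rw [← Nat.factorization_le_iff_dvd hn.ne' h240]
  intro p
  by_cases hp : p.Prime
  · rw [← Nat.Prime.pow_dvd_iff_le_factorization hp h240]
    rcases Nat.eq_zero_or_pos (n.factorization p) with h0 | hpos
    · simp [h0]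
    have hpn : p ∣ n := Nat.dvd_of_factorization_pos (by omega)
    have hple := small p hp hpn
    have hordp : p ^ n.factorization p ∣ n := Nat.ordProj_dvd n p
    have hp2 := hp.two_le
    interval_cases p
    · have h4 : n.factorization 2 ≤ 4 := by
        by_contra hgt
        exact no32 (dvd_trans (pow_dvd_pow 2 (by omega : 5 ≤ n.factorization 2)) hordp)
      calc (2:ℕ) ^ n.factorization 2 ∣ 2 ^ 4 := pow_dvd_pow 2 h4
        _ ∣ 240 := by norm_num
    · have h1 : n.factorization 3 ≤ 1 := by
        by_contra hgt
        exact no9 (dvd_trans (pow_dvd_pow 3 (by omega : 2 ≤ n.factorization 3)) hordp)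
      calc (3:ℕ) ^ n.factorization 3 ∣ 3 ^ 1 := pow_dvd_pow 3 h1
        _ ∣ 240 := by norm_num
    · exact absurd hp (by norm_num)
    · have h1 : n.factorization 5 ≤ 1 := by
        by_contra hgt
        exact no25 (dvd_trans (pow_dvd_pow 5 (by omega : 2 ≤ n.factorization 5)) hordp)
      calc (5:ℕ) ^ n.factorization 5 ∣ 5 ^ 1 := pow_dvd_pow 5 h1
        _ ∣ 240 := by norm_num
  · simp [Nat.factorization_eq_zero_of_not_prime n hp]

/-! ### Field-theoretic auxiliary results -/

/-- The intermediate field of elements of `ℚ̄` fixed by `σ ^ 4` for every automorphism `σ`. -/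
def fixedF : IntermediateField ℚ Qbar where
  carrier := {x : Qbar | ∀ σ : Qbar ≃ₐ[ℚ] Qbar, (σ ^ 4) x = x}
  mul_mem' := fun {a b} ha hb σ => by rw [map_mul, ha σ, hb σ]
  one_mem' := fun σ => map_one _
  add_mem' := fun {a b} ha hb σ => by rw [map_add, ha σ, hb σ]
  zero_mem' := fun σ => map_zero _
  algebraMap_mem' := fun r σ => (σ ^ 4).commutes r
  inv_mem' := fun a ha σ => by rw [map_inv₀, ha σ]

lemma QD4inf_le_fixedF : QD4inf ≤ fixedF := by
  apply iSup_le
  rintro ⟨K, hKfd, hKD4⟩ x hx σ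
  haveI : FiniteDimensional ℚ K := hKfd
  have hxL : x ∈ normalClosure ℚ K Qbar := K.le_normalClosure hx
  have h4 : (AlgEquiv.restrictNormalHom (F := ℚ) (K₁ := Qbar) (normalClosure ℚ K Qbar)) (σ ^ 4)
      = 1 := by
    rw [map_pow]
    exact hKD4.pow_four _
  have := AlgEquiv.restrictNormalHom_apply (normalClosure ℚ K Qbar) (σ ^ 4) ⟨x, hxL⟩
  erw [h4] at this
  exact this.symm.trans rfl

lemma exists_conj {n : ℕ} (hn : 0 < n) {ζ : Qbar} (hζ : IsPrimitiveRoot ζ n)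
    {k : ℕ} (hk : Nat.Coprime k n) : ∃ σ : Qbar ≃ₐ[ℚ] Qbar, σ ζ = ζ ^ k := by
  have hζk : IsPrimitiveRoot (ζ ^ k) n := hζ.pow_of_coprime k hk
  have hmin : minpoly ℚ ζ = minpoly ℚ (ζ ^ k) :=
    (cyclotomic_eq_minpoly_rat hζ hn).symm.trans (cyclotomic_eq_minpoly_rat hζk hn)
  exact minpoly.exists_algEquiv_of_root (Algebra.IsAlgebraic.isAlgebraic (ζ ^ k))
    (by rw [← hmin]; exact minpoly.aeval ℚ ζ)

lemma pow_four_fix {n : ℕ} (hn : 0 < n) {ζ : Qbar} (hζ : IsPrimitiveRoot ζ n)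
    (hfix : ∀ σ : Qbar ≃ₐ[ℚ] Qbar, (σ ^ 4) ζ = ζ) (u : (ZMod n)ˣ) : u ^ 4 = 1 := by
  by_cases hone : n = 1
  · subst hone
    exact Subsingleton.elim _ _
  haveI : NeZero n := ⟨hn.ne'⟩
  set k := (u : ZMod n).val with hkdef
  have hk : Nat.Coprime k n := ZMod.val_coe_unit_coprime u
  obtain ⟨σ, hσ⟩ := exists_conj hn hζ hk
  have hpow : ∀ m : ℕ, (σ ^ m) ζ = ζ ^ (k ^ m) := by
    intro m
    induction m with
    | zero => simp
    | succ m ih =>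
      rw [pow_succ, AlgEquiv.mul_apply, hσ, map_pow, ih, ← pow_mul, ← pow_succ]
  have h1 : ζ ^ (k ^ 4) = ζ ^ 1 := by rw [← hpow 4, hfix σ, pow_one]
  have hk1 : 1 ≤ k ^ 4 := by
    rcases Nat.eq_zero_or_pos k with hk0 | hk0
    · rw [hk0] at hk
      simp only [Nat.coprime_zero_left] at hk
      exact absurd hk hone
    · exact Nat.one_le_pow _ _ hk0
  have hmod : k ^ 4 ≡ 1 [MOD n] := by
    have hz : ζ ^ (k ^ 4 - 1) = 1 := by
      have hne : ζ ≠ 0 := hζ.ne_zero hn.ne'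
      have : ζ ^ (k ^ 4 - 1) * ζ = 1 * ζ := by
        rw [one_mul, ← pow_succ]
        rw [Nat.sub_add_cancel hk1, ← pow_one ζ  ] at *
        simpa using h1
      exact mul_right_cancel₀ hne this
    have hdvd : n ∣ k ^ 4 - 1 := (hζ.pow_eq_one_iff_dvd _).mp hz
    exact ((Nat.modEq_iff_dvd' hk1).mpr hdvd).symm
  have hcastpow : ((k : ZMod n)) ^ 4 = 1 := by
    have := (ZMod.natCast_eq_natCast_iff _ _ _).mpr hmod
    push_cast at this
    simpa using this
  have hcast : ((k : ZMod n)) = (u : ZMod n) := by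
    simp [hkdef, ZMod.natCast_val, ZMod.cast_id]
  ext
  push_cast
  rw [← hcast, hcastpow]


/-- For a positive integer `n`, the cyclotomic field `ℚ(ζₙ)` — the subfield of `ℚ̄` generated
by a primitive `n`-th root of unity — is contained in `ℚ(D₄^∞)` if and only if `n ∣ 240`. -/
theorem cyclotomic_le_QD4inf_iff_dvd_240 (n : ℕ) (hn : 0 < n) (ζ : Qbar)
    (hζ : IsPrimitiveRoot ζ n) :
    IntermediateField.adjoin ℚ {ζ} ≤ QD4inf ↔ n ∣ 240 := by
  constructor
  · intro hle
    apply dvd240 hn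
    apply pow_four_fix hn hζ
    intro σ
    exact QD4inf_le_fixedF (hle (IntermediateField.mem_adjoin_simple_self ℚ ζ)) σ
  · intro hd
    haveI : NeZero n := ⟨hn.ne'⟩
    set K : IntermediateField ℚ Qbar := IntermediateField.adjoin ℚ {ζ} with hK
    have hint : IsIntegral ℚ ζ := Algebra.IsIntegral.isIntegral ζ
    haveI hfd : FiniteDimensional ℚ K := IntermediateField.adjoin.finiteDimensional hint
    have hsub : K.toSubalgebra = Algebra.adjoin ℚ ({ζ} : Set Qbar) :=
      IntermediateField.adjoin_simple_toSubalgebra_of_isAlgebraic hint.isAlgebraic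
    let N : ℕ+ := ⟨n, hn⟩
    have hζ' : IsPrimitiveRoot ζ (N : ℕ) := hζ
    haveI hcyc : IsCyclotomicExtension {n} ℚ (Algebra.adjoin ℚ ({ζ} : Set Qbar)) :=
      hζ'.adjoin_isCyclotomicExtension ℚ
    haveI : IsCyclotomicExtension {n} ℚ K :=
      IsCyclotomicExtension.equiv _ _ _ (h := hcyc) (Subalgebra.equivOfEq _ _ hsub.symm)
    haveI : IsGalois ℚ K := IsCyclotomicExtension.isGalois {n} ℚ K
    have hNC : normalClosure ℚ K Qbar = K := by
      haveI : Normal ℚ K := IsGalois.to_normal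
      exact @IntermediateField.normalClosure_of_normal _ _ _ _ _ K (by convert this using 1; exact Subsingleton.elim _ _)
    have hgen : IsGenD4Type ((normalClosure ℚ K Qbar) ≃ₐ[ℚ] (normalClosure ℚ K Qbar)) := by
      rw [hNC]
      have hirr : Irreducible (Polynomial.cyclotomic (N : ℕ) ℚ) :=
        Polynomial.cyclotomic.irreducible_rat hn
      have e : (K ≃ₐ[ℚ] K) ≃* (ZMod n)ˣ := IsCyclotomicExtension.autEquivPow K hirr
      have hzn : IsGenD4Type ((ZMod n)ˣ) :=
        (isGenD4Type_of_comm ((ZMod 240)ˣ) zmod240_units_pow_four).of_surjective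
          (ZMod.unitsMap hd) (ZMod.unitsMap_surjective hd)
      exact hzn.of_surjective e.symm.toMonoidHom e.symm.surjective
    exact le_iSup (fun K : {K : IntermediateField ℚ Qbar // IsGenD4Ext K} => K.1)
      ⟨K, hfd, hgen⟩
end
end
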